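/- arXiv:2307.07632 — 8 statements merged into one kernel-verified Lean document; each statement's English description precedes it below -/
import Mathlib

section
/- Let G and L be invertible m×m real matrices, let g, h ∈ ℝ^m, and let p : Fin v → Fin m be an injective map of validation indices. Assume that the submatrix G^{p,p} (rows and columns not in the range of p) is invertible and that the submatrix (G⁻¹)_{p,p} is invertible. Set c = G⁻¹g, f = Lc, let c^(p) be the unique solution of G^{p,p} c^(p) = g^p, define the validation values s_p ∈ ℝ^v by (s_p)_i = Σ_{j ∉ range p} L_{p_i, j} (c^(p))_j, and the exact validation error e_p = h_p − s_p. If α ∈ ℝ^v satisfies (L⁻¹)_{:,p} α = (G⁻¹)_{:,p} ((G⁻¹)_{p,p})⁻¹ (G⁻¹ g)_p, then α = f_p − s_p; equivalently, e_p = α − f_p + h_p. -/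
open Matrix
open scoped Classical

section Aux

variable {m v : ℕ}

lemma aux_mul_submatrix_id (M N : Matrix (Fin m) (Fin m) ℝ) (p : Fin v → Fin m) :
    M * N.submatrix id p = (M * N).submatrix id p := by
  ext a i
  simp [Matrix.mul_apply]

lemma aux_one_submatrix_apply (p : Fin v → Fin m) (hp : Function.Injective p)
    (β : Fin v → ℝ) (k : Fin v) :
    ((1 : Matrix (Fin m) (Fin m) ℝ).submatrix id p *ᵥ β) (p k) = β k := by
  simp only [Matrix.mulVec, dotProduct, Matrix.submatrix_apply, id_eq, Matrix.one_apply]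
  rw [Finset.sum_eq_single k]
  · simp
  · intro i _ hik
    rw [if_neg (fun hh => hik (hp hh).symm), zero_mul]
  · simp

lemma aux_one_submatrix_apply_zero (p : Fin v → Fin m) {j : Fin m} (hj : j ∉ Set.range p)
    (β : Fin v → ℝ) :
    ((1 : Matrix (Fin m) (Fin m) ℝ).submatrix id p *ᵥ β) j = 0 := by
  simp only [Matrix.mulVec, dotProduct, Matrix.submatrix_apply, id_eq, Matrix.one_apply]
  apply Finset.sum_eq_zero
  intro i _
  rw [if_neg (fun hh => hj ⟨i, hh.symm⟩), zero_mul]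

end Aux

/-- Surrogate cross-validation, exact-solution case: if `α` solves the linear system
`(L⁻¹)_{:,p} α = (G⁻¹)_{:,p} ((G⁻¹)_{p,p})⁻¹ (G⁻¹ g)_p` exactly, then
`α = f_p − s_p`, equivalently `e_p = α − f_p + h_p`. -/
theorem surrogate_cv_exact_alpha {m v : ℕ}
    (G L : Matrix (Fin m) (Fin m) ℝ) (g h : Fin m → ℝ)
    (hG : IsUnit G) (hL : IsUnit L)
    (p : Fin v → Fin m) (hp : Function.Injective p)
    (hGpp : IsUnit (G.submatrix (Subtype.val : {j : Fin m // j ∉ Set.range p} → Fin m)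
      (Subtype.val : {j : Fin m // j ∉ Set.range p} → Fin m)))
    (hGinvpp : IsUnit ((G⁻¹).submatrix p p))
    (c : Fin m → ℝ) (hc : c = G⁻¹ *ᵥ g)
    (f : Fin m → ℝ) (hf : f = L *ᵥ c)
    (cp : {j : Fin m // j ∉ Set.range p} → ℝ)
    (hcp : G.submatrix (Subtype.val : {j : Fin m // j ∉ Set.range p} → Fin m)
      (Subtype.val : {j : Fin m // j ∉ Set.range p} → Fin m) *ᵥ cp = fun j => g j.1)
    (sp : Fin v → ℝ)
    (hsp : sp = fun i => ∑ j : {j : Fin m // j ∉ Set.range p}, L (p i) j.1 * cp j)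
    (ep : Fin v → ℝ) (hep : ep = fun i => h (p i) - sp i)
    (α : Fin v → ℝ)
    (hα : (L⁻¹).submatrix id p *ᵥ α =
      (G⁻¹).submatrix id p *ᵥ (((G⁻¹).submatrix p p)⁻¹ *ᵥ fun i => (G⁻¹ *ᵥ g) (p i))) :
    (α = fun i => f (p i) - sp i) ∧ (ep = fun i => α i - f (p i) + h (p i)) := by
  have hGdet : IsUnit G.det := (Matrix.isUnit_iff_isUnit_det G).mp hG
  have hLdet : IsUnit L.det := (Matrix.isUnit_iff_isUnit_det L).mp hL
  have hGinvppdet : IsUnit ((G⁻¹).submatrix p p).det :=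
    (Matrix.isUnit_iff_isUnit_det _).mp hGinvpp
  -- extension of cp by zero
  set chat : Fin m → ℝ := fun j => if hj : j ∈ Set.range p then 0 else cp ⟨j, hj⟩ with hchat
  set w : Fin m → ℝ := c - chat with hw
  -- basic solves
  have hGc : G *ᵥ c = g := by
    rw [hc, Matrix.mulVec_mulVec, Matrix.mul_nonsing_inv _ hGdet, Matrix.one_mulVec]
  -- sums against chat reduce to sums over the complement subtype
  have hsum : ∀ (M : Matrix (Fin m) (Fin m) ℝ) (a : Fin m),
      (M *ᵥ chat) a = ∑ j : {j : Fin m // j ∉ Set.range p}, M a j.1 * cp j := by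
    intro M a
    have key := Fintype.sum_subtype_add_sum_subtype (fun j : Fin m => j ∈ Set.range p)
      (fun k => M a k * chat k)
    simp only [Matrix.mulVec, dotProduct]
    rw [← key]
    refine Eq.trans (congrArg₂ (· + ·) (Finset.sum_eq_zero fun x _ => ?_)
      (Finset.sum_congr rfl fun x _ => ?_)) (zero_add _)
    · simp only [hchat]
      obtain ⟨y, hy⟩ := x.2
      rw [dif_pos ⟨y, hy⟩, mul_zero]
    · simp only [hchat]
      rw [dif_neg x.2]
  have hGchat : ∀ (j : Fin m) (hj : j ∉ Set.range p), (G *ᵥ chat) j = g j := by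
    intro j hj
    rw [hsum]
    exact congrFun hcp ⟨j, hj⟩
  have hchatp : ∀ i : Fin v, chat (p i) = 0 := by
    intro i
    simp [hchat, Set.mem_range_self i]
  set γ : Fin v → ℝ := fun i => (G *ᵥ w) (p i) with hγ
  -- Claim A: G w is supported on range p
  have hA : G *ᵥ w = (1 : Matrix (Fin m) (Fin m) ℝ).submatrix id p *ᵥ γ := by
    funext j
    by_cases hj : j ∈ Set.range p
    · obtain ⟨k, rfl⟩ := hj
      rw [aux_one_submatrix_apply p hp]
    · rw [aux_one_submatrix_apply_zero p hj]
      rw [hw, Matrix.mulVec_sub]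
      have := hGchat j hj
      simp only [Pi.sub_apply, this, hGc, sub_self]
  have hGinvw : G⁻¹ *ᵥ (G *ᵥ w) = w := by
    rw [Matrix.mulVec_mulVec, Matrix.nonsing_inv_mul _ hGdet, Matrix.one_mulVec]
  have hwp : ∀ i : Fin v, w (p i) = c (p i) := by
    intro i
    simp [hw, hchatp i]
  -- Claim B: (G⁻¹)_{pp} γ = c ∘ p
  have hppγ : (G⁻¹).submatrix p p *ᵥ γ = fun i => c (p i) := by
    have h1 : G⁻¹ *ᵥ ((1 : Matrix (Fin m) (Fin m) ℝ).submatrix id p *ᵥ γ) = w := by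
      rw [← hA, hGinvw]
    have h2 : G⁻¹ *ᵥ ((1 : Matrix (Fin m) (Fin m) ℝ).submatrix id p *ᵥ γ)
        = (G⁻¹).submatrix id p *ᵥ γ := by
      rw [Matrix.mulVec_mulVec, aux_mul_submatrix_id, mul_one]
    funext i
    have h3 : ((G⁻¹).submatrix p p *ᵥ γ) i = ((G⁻¹).submatrix id p *ᵥ γ) (p i) := by
      simp [Matrix.mulVec, dotProduct]
    rw [h3, ← h2, h1, hwp i]
  -- Claim C: β = γ
  set β : Fin v → ℝ := ((G⁻¹).submatrix p p)⁻¹ *ᵥ fun i => (G⁻¹ *ᵥ g) (p i) with hβ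
  have hβγ : β = γ := by
    have hcpi : (fun i => (G⁻¹ *ᵥ g) (p i)) = fun i => c (p i) := by
      funext i; rw [hc]
    rw [hβ, hcpi, ← hppγ, Matrix.mulVec_mulVec, Matrix.nonsing_inv_mul _ hGinvppdet,
      Matrix.one_mulVec]
  -- Claim D: the RHS of hα equals w
  have hu : (G⁻¹).submatrix id p *ᵥ (((G⁻¹).submatrix p p)⁻¹ *ᵥ fun i => (G⁻¹ *ᵥ g) (p i))
      = w := by
    show (G⁻¹).submatrix id p *ᵥ β = w
    rw [hβγ]
    have : (G⁻¹).submatrix id p *ᵥ γ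
        = G⁻¹ *ᵥ ((1 : Matrix (Fin m) (Fin m) ℝ).submatrix id p *ᵥ γ) := by
      rw [Matrix.mulVec_mulVec, aux_mul_submatrix_id, mul_one]
    rw [this, ← hA, hGinvw]
  -- final: apply L
  have hLw : (1 : Matrix (Fin m) (Fin m) ℝ).submatrix id p *ᵥ α = L *ᵥ w := by
    calc (1 : Matrix (Fin m) (Fin m) ℝ).submatrix id p *ᵥ α
        = (L * L⁻¹).submatrix id p *ᵥ α := by rw [Matrix.mul_nonsing_inv _ hLdet]
      _ = (L * (L⁻¹).submatrix id p) *ᵥ α := by rw [aux_mul_submatrix_id]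
      _ = L *ᵥ ((L⁻¹).submatrix id p *ᵥ α) := by rw [Matrix.mulVec_mulVec]
      _ = L *ᵥ w := by rw [hα, hu]
  have hαval : α = fun i => f (p i) - sp i := by
    funext k
    have h1 : α k = (L *ᵥ w) (p k) := by
      rw [← hLw, aux_one_submatrix_apply p hp]
    have h2 : (L *ᵥ chat) (p k) = sp k := by
      rw [hsum, hsp]
    rw [h1, hw, Matrix.mulVec_sub, Pi.sub_apply, h2, hf]
  refine ⟨hαval, ?_⟩
  funext i
  rw [hep, hαval]
  ring
end

section
/- Let G and L be invertible m×m real matrices, let g, h ∈ ℝ^m, and let p : Fin v → Fin m be an injective map of validation indices. Assume that the submatrix G^{p,p} is invertible and that (G⁻¹)_{p,p} is invertible. Set c = G⁻¹g, f = Lc, let c^(p) solve G^{p,p} c^(p) = g^p, define (s_p)_i = Σ_{j ∉ range p} L_{p_i, j} (c^(p))_j and the exact validation error e_p = h_p − s_p. Put M = (L⁻¹)_{:,p} and w = (G⁻¹)_{:,p} ((G⁻¹)_{p,p})⁻¹ (G⁻¹ g)_p. Then MᵀM is invertible, and if the residual vanishes, i.e. M (MᵀM)⁻¹ Mᵀ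 w = w, then e_p = (MᵀM)⁻¹ Mᵀ w − f_p + h_p; that is, the surrogate cross-validation error ε_p = (MᵀM)⁻¹ Mᵀ w − f_p + h_p equals the exact validation error e_p. -/
open Matrix
open scoped Classical

private def extMap {α : Type*} [Fintype α] {m : ℕ} (q : α → Fin m) (u : α → ℝ) : Fin m → ℝ :=
  fun k => ∑ i, if k = q i then u i else 0

private lemma extMap_apply {α : Type*} [Fintype α] {m : ℕ} {q : α → Fin m}
    (hq : Function.Injective q) (u : α → ℝ) (i : α) : extMap q u (q i) = u i := by
  unfold extMap
  rw [Finset.sum_eq_single i]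
  · simp
  · intro j _ hj
    exact if_neg (fun h => hj (hq h.symm))
  · simp

private lemma extMap_notMem {α : Type*} [Fintype α] {m : ℕ} {q : α → Fin m}
    (u : α → ℝ) {k : Fin m} (hk : k ∉ Set.range q) : extMap q u k = 0 := by
  unfold extMap
  refine Finset.sum_eq_zero fun i _ => ?_
  have : k ≠ q i := fun h => hk ⟨i, h.symm⟩
  simp [this]

private lemma mulVec_extMap {α : Type*} [Fintype α] {m : ℕ} (q : α → Fin m) (u : α → ℝ)
    (A : Matrix (Fin m) (Fin m) ℝ) : A *ᵥ extMap q u = A.submatrix id q *ᵥ u := by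
  funext j
  simp only [mulVec, dotProduct, extMap, submatrix_apply, id_eq, Finset.mul_sum]
  rw [Finset.sum_comm]
  refine Finset.sum_congr rfl fun i _ => ?_
  rw [Finset.sum_eq_single (q i)] <;> simp +contextual [eq_comm]

private lemma extMap_eq_self {α : Type*} [Fintype α] {m : ℕ} {q : α → Fin m}
    (hq : Function.Injective q) (z : Fin m → ℝ) (hz : ∀ k, k ∉ Set.range q → z k = 0) :
    extMap q (fun i => z (q i)) = z := by
  funext k
  by_cases hk : k ∈ Set.range q
  · obtain ⟨i, rfl⟩ := hk
    exact extMap_apply hq _ i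
  · rw [extMap_notMem _ hk, hz k hk]

/-- Surrogate cross-validation theorem: with `M = (L⁻¹)_{:,p}` and
`w = (G⁻¹)_{:,p} ((G⁻¹)_{p,p})⁻¹ (G⁻¹ g)_p`, the Gram matrix `MᵀM` is invertible, and if the
least-squares residual vanishes (`M (MᵀM)⁻¹ Mᵀ w = w`) then the surrogate CV error
`ε_p = (MᵀM)⁻¹ Mᵀ w − f_p + h_p` equals the exact validation error `e_p`. -/
theorem surrogate_cv {m v : ℕ}
    (G L : Matrix (Fin m) (Fin m) ℝ) (g h : Fin m → ℝ)
    (hG : IsUnit G) (hL : IsUnit L)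
    (p : Fin v → Fin m) (hp : Function.Injective p)
    (hGpp : IsUnit (G.submatrix (Subtype.val : {j : Fin m // j ∉ Set.range p} → Fin m)
      (Subtype.val : {j : Fin m // j ∉ Set.range p} → Fin m)))
    (hGinvpp : IsUnit ((G⁻¹).submatrix p p))
    (c : Fin m → ℝ) (hc : c = G⁻¹ *ᵥ g)
    (f : Fin m → ℝ) (hf : f = L *ᵥ c)
    (cp : {j : Fin m // j ∉ Set.range p} → ℝ)
    (hcp : G.submatrix (Subtype.val : {j : Fin m // j ∉ Set.range p} → Fin m)
      (Subtype.val : {j : Fin m // j ∉ Set.range p} → Fin m) *ᵥ cp = fun j => g j.1)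
    (sp : Fin v → ℝ)
    (hsp : sp = fun i => ∑ j : {j : Fin m // j ∉ Set.range p}, L (p i) j.1 * cp j)
    (ep : Fin v → ℝ) (hep : ep = fun i => h (p i) - sp i)
    (M : Matrix (Fin m) (Fin v) ℝ) (hM : M = (L⁻¹).submatrix id p)
    (w : Fin m → ℝ)
    (hw : w = (G⁻¹).submatrix id p *ᵥ (((G⁻¹).submatrix p p)⁻¹ *ᵥ fun i => (G⁻¹ *ᵥ g) (p i))) :
    IsUnit (Mᵀ * M) ∧
      (M *ᵥ ((Mᵀ * M)⁻¹ *ᵥ (Mᵀ *ᵥ w)) = w →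
        ep = fun i => ((Mᵀ * M)⁻¹ *ᵥ (Mᵀ *ᵥ w)) i - f (p i) + h (p i)) := by
  have hGdet : IsUnit G.det := (Matrix.isUnit_iff_isUnit_det G).mp hG
  have hLdet : IsUnit L.det := (Matrix.isUnit_iff_isUnit_det L).mp hL
  -- M *ᵥ u = L⁻¹ *ᵥ extMap p u
  have hMu : ∀ u : Fin v → ℝ, M *ᵥ u = L⁻¹ *ᵥ extMap p u := fun u => by
    rw [hM, mulVec_extMap]
  -- Part 1 : IsUnit (Mᵀ * M)
  have hMinj : ∀ x : Fin v → ℝ, M *ᵥ x = 0 → x = 0 := by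
    intro x hx
    rw [hMu] at hx
    have hext : extMap p x = 0 := by
      have := congrArg (L *ᵥ ·) hx
      simpa [Matrix.mulVec_mulVec, Matrix.mul_nonsing_inv L hLdet] using this
    funext i
    have := congrFun hext (p i)
    rwa [extMap_apply hp] at this
  have hUnit : IsUnit (Mᵀ * M) := by
    rw [← Matrix.mulVec_injective_iff_isUnit]
    intro x y hxy
    have hsub : (Mᵀ * M) *ᵥ (x - y) = 0 := by
      rw [Matrix.mulVec_sub, hxy, sub_self]
    have h0 : (M *ᵥ (x - y)) ⬝ᵥ (M *ᵥ (x - y)) = 0 := by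
      rw [Matrix.dotProduct_mulVec, ← Matrix.mulVec_transpose, Matrix.mulVec_mulVec, hsub,
        zero_dotProduct]
    have := hMinj (x - y) (dotProduct_self_eq_zero.mp h0)
    exact sub_eq_zero.mp this
  refine ⟨hUnit, fun hres => ?_⟩
  -- the key identity: w = c - c̃ where c̃ is zero-extension of cp
  set ct : Fin m → ℝ := extMap (Subtype.val : {j : Fin m // j ∉ Set.range p} → Fin m) cp with hct
  have hvalinj : Function.Injective (Subtype.val : {j : Fin m // j ∉ Set.range p} → Fin m) :=
    Subtype.val_injective
  have hGct : G *ᵥ ct = G.submatrix id Subtype.val *ᵥ cp := mulVec_extMap _ _ _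
  set z : Fin m → ℝ := fun j => g j - (G *ᵥ ct) j with hzdef
  have hz0 : ∀ k, k ∉ Set.range p → z k = 0 := by
    intro k hk
    have h1 := congrFun hcp ⟨k, hk⟩
    show g k - (G *ᵥ ct) k = 0
    rw [hGct]
    simp only [Matrix.mulVec, dotProduct, Matrix.submatrix_apply, id_eq] at h1 ⊢
    rw [h1]
    ring
  have hGc : G *ᵥ c = g := by
    rw [hc, Matrix.mulVec_mulVec, Matrix.mul_nonsing_inv G hGdet, Matrix.one_mulVec]
  have hdelta : c - ct = G⁻¹ *ᵥ z := by
    have : G *ᵥ (c - ct) = z := by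
      rw [Matrix.mulVec_sub, hGc]
      funext j; simp [hzdef]
    rw [← this, Matrix.mulVec_mulVec, Matrix.nonsing_inv_mul G hGdet, Matrix.one_mulVec]
  set b : Fin v → ℝ := fun i => z (p i) with hb
  have hzext : z = extMap p b := (extMap_eq_self hp z hz0).symm
  have hdelta2 : c - ct = (G⁻¹).submatrix id p *ᵥ b := by
    rw [hdelta, hzext, mulVec_extMap]
  have hctp : ∀ i, ct (p i) = 0 := by
    intro i
    refine extMap_notMem _ ?_
    rintro ⟨⟨j, hj⟩, rfl⟩
    exact hj ⟨i, rfl⟩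
  have hcpvals : (fun i => c (p i)) = (G⁻¹).submatrix p p *ᵥ b := by
    funext i
    have := congrFun hdelta2 (p i)
    simp only [Pi.sub_apply, hctp i, sub_zero] at this
    rw [this]
    simp [Matrix.mulVec, dotProduct]
  have hbval : b = ((G⁻¹).submatrix p p)⁻¹ *ᵥ (fun i => c (p i)) := by
    rw [hcpvals, Matrix.mulVec_mulVec, Matrix.nonsing_inv_mul _
      ((Matrix.isUnit_iff_isUnit_det _).mp hGinvpp), Matrix.one_mulVec]
  have hcg : (fun i => (G⁻¹ *ᵥ g) (p i)) = fun i => c (p i) := by rw [← hc]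
  have hwkey : w = c - ct := by
    rw [hw, hcg, ← hbval]
    exact hdelta2.symm
  -- finish
  set u : Fin v → ℝ := (Mᵀ * M)⁻¹ *ᵥ (Mᵀ *ᵥ w) with hu
  have hLMu : L *ᵥ (M *ᵥ u) = extMap p u := by
    rw [hMu, Matrix.mulVec_mulVec, Matrix.mul_nonsing_inv L hLdet, Matrix.one_mulVec]
  have hLw : L *ᵥ w = extMap p u := by rw [← hres, hLMu]
  have hui : ∀ i, u i = f (p i) - sp i := by
    intro i
    have h1 : extMap p u (p i) = u i := extMap_apply hp u i
    have h2 : (L *ᵥ w) (p i) = f (p i) - sp i := by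
      rw [hwkey, Matrix.mulVec_sub, hf]
      have : (L *ᵥ ct) (p i) = sp i := by
        rw [hct, mulVec_extMap, hsp]
        simp [Matrix.mulVec, dotProduct]
      simp [this]
    rw [← h1, ← hLw, h2]
  funext i
  rw [hep]
  have := hui i
  simp only [← hu, this]
  ring
end

section
/- Leave-one-out case of the surrogate cross-validation theorem. Let G and L be invertible m×m real matrices, g, h ∈ ℝ^m, and let p ∈ {1,…,m} be a single validation index. Assume that the (m−1)×(m−1) submatrix of G obtained by deleting row and column p is invertible, and that (G⁻¹)_{p,p} ≠ 0. Set c = G⁻¹g, f = Lc, let c^(p) solve the reduced system on the complement of p, define s_p = Σ_{j ≠ p} L_{p,j} (c^(p))_j and e_p = h_p − s_p. Let u ∈ ℝ^m be the p-th column of L⁻¹ and w = ((G⁻¹ g)_p / (G⁻¹)_{p,p}) · (p-th column of G⁻¹). If w is a scalar multiple of u, then e_p = ⟨u, w⟩/‖u‖² − f_p + h_p, where ⟨·,·⟩ is the Euclidean inner product and ‖·‖ the Euclidean norm. -/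
open Matrix
open scoped Classical

/-- Leave-one-out case of the surrogate cross-validation theorem: with `u` the `p`-th column
of `L⁻¹` and `w = ((G⁻¹ g)_p / (G⁻¹)_{p,p}) · (p-th column of G⁻¹)`, if `w` is a scalar
multiple of `u` then `e_p = ⟨u, w⟩/‖u‖² − f_p + h_p`. -/
theorem surrogate_loocv {m : ℕ}
    (G L : Matrix (Fin m) (Fin m) ℝ) (g h : Fin m → ℝ)
    (hG : IsUnit G) (hL : IsUnit L)
    (p : Fin m)
    (hGpp : IsUnit (G.submatrix (Subtype.val : {j : Fin m // j ≠ p} → Fin m)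
      (Subtype.val : {j : Fin m // j ≠ p} → Fin m)))
    (hGinvpp : (G⁻¹) p p ≠ 0)
    (c : Fin m → ℝ) (hc : c = G⁻¹ *ᵥ g)
    (f : Fin m → ℝ) (hf : f = L *ᵥ c)
    (cp : {j : Fin m // j ≠ p} → ℝ)
    (hcp : G.submatrix (Subtype.val : {j : Fin m // j ≠ p} → Fin m)
      (Subtype.val : {j : Fin m // j ≠ p} → Fin m) *ᵥ cp = fun j => g j.1)
    (sp : ℝ) (hsp : sp = ∑ j : {j : Fin m // j ≠ p}, L p j.1 * cp j)
    (ep : ℝ) (hep : ep = h p - sp)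
    (u : Fin m → ℝ) (hu : u = fun i => (L⁻¹) i p)
    (w : Fin m → ℝ) (hw : w = fun i => ((G⁻¹ *ᵥ g) p / (G⁻¹) p p) * (G⁻¹) i p)
    (hscalar : ∃ t : ℝ, w = t • u) :
    ep = (u ⬝ᵥ w) / (u ⬝ᵥ u) - f p + h p := by
  obtain ⟨t, hwt⟩ := hscalar
  have hGdet : IsUnit G.det := (Matrix.isUnit_iff_isUnit_det G).mp hG
  have hLdet : IsUnit L.det := (Matrix.isUnit_iff_isUnit_det L).mp hL
  set α : ℝ := (G⁻¹ *ᵥ g) p / (G⁻¹) p p with hα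
  -- L *ᵥ u is the p-th standard basis vector
  have hLu : L *ᵥ u = fun i => (1 : Matrix (Fin m) (Fin m) ℝ) i p := by
    subst hu
    funext i
    have : (L *ᵥ fun i => (L⁻¹) i p) i = (L * L⁻¹) i p := by
      simp [Matrix.mulVec, Matrix.mul_apply, dotProduct]
    rw [this, Matrix.mul_nonsing_inv L hLdet]
  have hLup : (L *ᵥ u) p = 1 := by rw [hLu]; simp [Matrix.one_apply]
  -- u ≠ 0
  have hune : u ⬝ᵥ u ≠ 0 := by
    intro h0
    have hu0 : u = 0 := by
      funext i
      have := Finset.sum_eq_zero_iff_of_nonneg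
        (fun j _ => mul_self_nonneg (u j)) |>.mp h0 i (Finset.mem_univ i)
      exact mul_self_eq_zero.mp this
    rw [hu0] at hLup
    simp [Matrix.mulVec] at hLup
  -- G *ᵥ w is α times the p-th standard basis vector
  have hGw : G *ᵥ w = fun i => α * (1 : Matrix (Fin m) (Fin m) ℝ) i p := by
    funext i
    have h1 : (G *ᵥ fun j => (G⁻¹) j p) i = (G * G⁻¹) i p := by
      simp [Matrix.mulVec, Matrix.mul_apply, dotProduct]
    have : w = fun j => α * (G⁻¹) j p := by rw [hw]
    rw [this]
    calc (G *ᵥ fun j => α * (G⁻¹) j p) i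
        = α * (G *ᵥ fun j => (G⁻¹) j p) i := by
          simp only [Matrix.mulVec, dotProduct, Finset.mul_sum]
          exact Finset.sum_congr rfl fun x _ => by ring
      _ = α * (G * G⁻¹) i p := by rw [h1]
      _ = α * (1 : Matrix (Fin m) (Fin m) ℝ) i p := by
          rw [Matrix.mul_nonsing_inv G hGdet]
  have hGc : G *ᵥ c = g := by
    rw [hc, Matrix.mulVec_mulVec, Matrix.mul_nonsing_inv G hGdet, Matrix.one_mulVec]
  -- w p = c p
  have hwp : w p = c p := by
    rw [hw, hc]
    exact div_mul_cancel₀ _ hGinvpp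
  -- the restriction of c - w solves the reduced system
  have hred : (G.submatrix (Subtype.val : {j : Fin m // j ≠ p} → Fin m)
      (Subtype.val : {j : Fin m // j ≠ p} → Fin m)) *ᵥ (fun j => c j.1 - w j.1)
      = fun j => g j.1 := by
    funext j
    have hsum : ∀ F : Fin m → ℝ, ∑ k : {k : Fin m // k ≠ p}, F k.1
        = ∑ k : Fin m, F k - F p := by
      intro F
      rw [Fintype.sum_eq_add_sum_compl p F]
      rw [← Finset.sum_subtype ({p}ᶜ : Finset (Fin m))
        (fun x => by simp) (fun k => F k)]
      ring
    have : (G.submatrix (Subtype.val : {j : Fin m // j ≠ p} → Fin m)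
        (Subtype.val : {j : Fin m // j ≠ p} → Fin m) *ᵥ
        fun (k : {k : Fin m // k ≠ p}) => c k.1 - w k.1) j
        = ∑ k : {k : Fin m // k ≠ p}, G j.1 k.1 * (c k.1 - w k.1) := by
      simp [Matrix.mulVec, dotProduct, Matrix.submatrix]
    rw [this, hsum (fun k => G j.1 k * (c k - w k))]
    have hGcw : ∑ k : Fin m, G j.1 k * (c k - w k) = (G *ᵥ c) j.1 - (G *ᵥ w) j.1 := by
      simp [Matrix.mulVec, dotProduct, mul_sub, Finset.sum_sub_distrib]
    rw [hGcw, hGc, hGw, hwp]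
    simp [Matrix.one_apply_ne j.2]
  -- hence cp equals that restriction
  have hcpeq : cp = fun j => c j.1 - w j.1 := by
    have hinj : Function.Injective (G.submatrix (Subtype.val : {j : Fin m // j ≠ p} → Fin m)
        (Subtype.val : {j : Fin m // j ≠ p} → Fin m)).mulVec :=
      Matrix.mulVec_injective_iff_isUnit.mpr hGpp
    apply hinj
    rw [hcp, hred]
  -- compute sp
  have hsum2 : ∀ F : Fin m → ℝ, ∑ k : {k : Fin m // k ≠ p}, F k.1
      = ∑ k : Fin m, F k - F p := by
    intro F
    rw [Fintype.sum_eq_add_sum_compl p F]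
    rw [← Finset.sum_subtype ({p}ᶜ : Finset (Fin m))
      (fun x => by simp) (fun k => F k)]
    ring
  have hspv : sp = f p - t := by
    rw [hsp, hcpeq]
    rw [hsum2 (fun k => L p k * (c k - w k))]
    have h1 : ∑ k : Fin m, L p k * (c k - w k) = (L *ᵥ c) p - (L *ᵥ w) p := by
      simp [Matrix.mulVec, dotProduct, mul_sub, Finset.sum_sub_distrib]
    rw [h1, hwp, hf]
    have h2 : (L *ᵥ w) p = t := by
      rw [hwt]
      have : L *ᵥ (t • u) = t • (L *ᵥ u) := by rw [Matrix.mulVec_smul]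
      rw [this, hLu]
      simp [Matrix.one_apply]
    rw [h2]
    ring
  -- compute the quotient
  have hq : (u ⬝ᵥ w) / (u ⬝ᵥ u) = t := by
    rw [hwt]
    have : u ⬝ᵥ (t • u) = t * (u ⬝ᵥ u) := by
      simp only [dotProduct, Finset.mul_sum, Pi.smul_apply, smul_eq_mul]
      exact Finset.sum_congr rfl fun x _ => by ring
    rw [this]
    field_simp
  rw [hep, hspv, hq]
  ring
end

section
/- Extended Rippa's algorithm (the interpolation case G = L of the surrogate scheme, which is exact). Let A be an invertible m×m real matrix, g ∈ ℝ^m, and p : Fin v → Fin m injective. Assume the submatrix A^{p,p} (rows and columns not in the range of p) is invertible and the submatrix (A⁻¹)_{p,p} is invertible. Let c^(p) be the unique solution of A^{p,p} c^(p) = g^p. Then the vector of k-fold cross-validation errors e_p ∈ ℝ^v, with entries (e_p)_i = g_{p_i} − Σ_{j ∉ range p} A_{p_i, j} (c^(p))_j, satisfies e_p = ((A⁻¹)_{p,p})⁻¹ (A⁻¹ g)_p. -/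
open Matrix
open scoped Classical

private lemma sum_range_aux {m v : ℕ} {p : Fin v → Fin m} (hp : Function.Injective p)
    (f : Fin m → ℝ) (h0 : ∀ k, k ∉ Set.range p → f k = 0) :
    ∑ k, f k = ∑ j, f (p j) := by
  rw [show (∑ j, f (p j)) = ∑ x ∈ Finset.univ.image p, f x from
    (Finset.sum_image fun i _ j _ h => hp h).symm]
  refine (Finset.sum_subset (Finset.subset_univ _) fun x _ hx => h0 x ?_).symm
  simpa using hx

private lemma sum_compl_aux {m v : ℕ} {p : Fin v → Fin m}
    (f : Fin m → ℝ) (h0 : ∀ k, k ∈ Set.range p → f k = 0) :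
    ∑ k, f k = ∑ k : {k : Fin m // k ∉ Set.range p}, f k.1 := by
  rw [← Finset.sum_subtype (Finset.univ.filter (fun k => k ∉ Set.range p))
    (by simp) f]
  refine (Finset.sum_subset (Finset.filter_subset _ _) fun x _ hx => h0 x ?_).symm
  simpa using hx

/-- Extended Rippa's algorithm: the vector of `k`-fold cross-validation errors for an
interpolation problem `A c = g` satisfies `e_p = ((A⁻¹)_{p,p})⁻¹ (A⁻¹ g)_p`. -/
theorem extended_rippa {m v : ℕ}
    (A : Matrix (Fin m) (Fin m) ℝ) (g : Fin m → ℝ)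
    (hA : IsUnit A)
    (p : Fin v → Fin m) (hp : Function.Injective p)
    (hApp : IsUnit (A.submatrix (Subtype.val : {j : Fin m // j ∉ Set.range p} → Fin m)
      (Subtype.val : {j : Fin m // j ∉ Set.range p} → Fin m)))
    (hAinvpp : IsUnit ((A⁻¹).submatrix p p))
    (cp : {j : Fin m // j ∉ Set.range p} → ℝ)
    (hcp : A.submatrix (Subtype.val : {j : Fin m // j ∉ Set.range p} → Fin m)
      (Subtype.val : {j : Fin m // j ∉ Set.range p} → Fin m) *ᵥ cp = fun j => g j.1)
    (ep : Fin v → ℝ)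
    (hep : ep = fun i => g (p i) - ∑ j : {j : Fin m // j ∉ Set.range p}, A (p i) j.1 * cp j) :
    ep = ((A⁻¹).submatrix p p)⁻¹ *ᵥ fun i => (A⁻¹ *ᵥ g) (p i) := by
  set c : Fin m → ℝ := fun k => if h : k ∈ Set.range p then 0 else cp ⟨k, h⟩ with hc
  set r : Fin m → ℝ := g - A *ᵥ c with hr
  have hAc : ∀ j : Fin m, (A *ᵥ c) j
      = ∑ k : {k : Fin m // k ∉ Set.range p}, A j k.1 * cp k := by
    intro j
    have h1 : (A *ᵥ c) j = ∑ k, A j k * c k := rfl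
    rw [h1, sum_compl_aux (fun k => A j k * c k)
      (fun k hk => by show A j k * c k = 0; rw [show c k = 0 from dif_pos hk, mul_zero])]
    exact Finset.sum_congr rfl fun k _ => by
      show A j k.1 * c k.1 = A j k.1 * cp k
      rw [show c k.1 = cp k from dif_neg k.2]
  -- r vanishes off the range of p
  have hr0 : ∀ k : Fin m, k ∉ Set.range p → r k = 0 := by
    intro k hk
    have h2 := congrFun hcp ⟨k, hk⟩
    simp only [mulVec, dotProduct, submatrix_apply] at h2
    show g k - (A *ᵥ c) k = 0
    rw [hAc k]
    rw [show (∑ x : {k : Fin m // k ∉ Set.range p}, A k x.1 * cp x) = g k from h2, sub_self]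
  -- r agrees with ep on the range
  have hre : ∀ i, r (p i) = ep i := by
    intro i
    show g (p i) - (A *ᵥ c) (p i) = ep i
    rw [hAc (p i), hep]
  -- A⁻¹ r = A⁻¹ g - c
  have hinv : A⁻¹ *ᵥ r = A⁻¹ *ᵥ g - c := by
    have : A⁻¹ *ᵥ (A *ᵥ c) = c := by
      rw [mulVec_mulVec, nonsing_inv_mul A ((isUnit_iff_isUnit_det A).mp hA), one_mulVec]
    rw [hr, mulVec_sub, this]
  -- key identity
  have hkey : (A⁻¹).submatrix p p *ᵥ ep = fun i => (A⁻¹ *ᵥ g) (p i) := by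
    funext i
    have h2 : (A⁻¹ *ᵥ r) (p i) = ((A⁻¹).submatrix p p *ᵥ ep) i := by
      show ∑ k, A⁻¹ (p i) k * r k = ∑ j, (A⁻¹) (p i) (p j) * ep j
      rw [sum_range_aux hp (fun k => A⁻¹ (p i) k * r k)
        (fun k hk => by show A⁻¹ (p i) k * r k = 0; rw [hr0 k hk, mul_zero])]
      exact Finset.sum_congr rfl fun j _ => by rw [hre j]
    have h3 : (A⁻¹ *ᵥ r) (p i) = (A⁻¹ *ᵥ g) (p i) := by
      rw [hinv]
      have : c (p i) = 0 := by simp [hc]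
      simp [this]
    rw [← h2, h3]
  rw [← hkey, mulVec_mulVec, nonsing_inv_mul _ ((isUnit_iff_isUnit_det _).mp hAinvpp),
    one_mulVec]
end

section
/- Rippa's leave-one-out cross-validation formula. Let A be an invertible m×m real matrix, g ∈ ℝ^m, and p ∈ {1,…,m}. Assume that the (m−1)×(m−1) submatrix of A obtained by deleting row and column p is invertible and that (A⁻¹)_{p,p} ≠ 0. Let c^(p) be the unique solution of the reduced system obtained from Ac = g by deleting the p-th row and column of A and the p-th entry of g. Then the leave-one-out validation error satisfies g_p − Σ_{j ≠ p} A_{p,j} (c^(p))_j = (A⁻¹ g)_p / (A⁻¹)_{p,p}. -/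
open Matrix
open scoped Classical

lemma rippa_sum_split {m : ℕ} (p : Fin m) (f : Fin m → ℝ) :
    ∑ k, f k = f p + ∑ k : {k : Fin m // k ≠ p}, f k.1 := by
  have h1 : ∑ k : {k : Fin m // k ≠ p}, f k.1 = ∑ k ∈ Finset.univ.erase p, f k := by
    rw [Finset.sum_subtype (p := fun k => k ≠ p) (Finset.univ.erase p) (fun x => by simp [Finset.mem_erase]) f]
  rw [h1, Finset.add_sum_erase _ f (Finset.mem_univ p)]

/-- Rippa's leave-one-out cross-validation formula:
`g_p − Σ_{j ≠ p} A_{p,j} (c^(p))_j = (A⁻¹ g)_p / (A⁻¹)_{p,p}`. -/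
theorem rippa_loocv {m : ℕ}
    (A : Matrix (Fin m) (Fin m) ℝ) (g : Fin m → ℝ)
    (hA : IsUnit A)
    (p : Fin m)
    (hApp : IsUnit (A.submatrix (Subtype.val : {j : Fin m // j ≠ p} → Fin m)
      (Subtype.val : {j : Fin m // j ≠ p} → Fin m)))
    (hAinvpp : (A⁻¹) p p ≠ 0)
    (cp : {j : Fin m // j ≠ p} → ℝ)
    (hcp : A.submatrix (Subtype.val : {j : Fin m // j ≠ p} → Fin m)
      (Subtype.val : {j : Fin m // j ≠ p} → Fin m) *ᵥ cp = fun j => g j.1) :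
    g p - ∑ j : {j : Fin m // j ≠ p}, A p j.1 * cp j = (A⁻¹ *ᵥ g) p / (A⁻¹) p p := by
  have hdet : IsUnit A.det := (Matrix.isUnit_iff_isUnit_det A).mp hA
  set e : ℝ := (A⁻¹ *ᵥ g) p / (A⁻¹) p p with he
  set v : Fin m → ℝ := fun i => g i - e * (Pi.single p 1 : Fin m → ℝ) i with hvdef
  set x : Fin m → ℝ := A⁻¹ *ᵥ v with hxdef
  have hvsub : v = g - e • (Pi.single p 1 : Fin m → ℝ) := by
    funext i; simp [hvdef]
  have hxp : x p = 0 := by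
    have h0 : x p = (A⁻¹ *ᵥ g) p - e * (A⁻¹ *ᵥ (Pi.single p 1 : Fin m → ℝ)) p := by
      rw [hxdef, hvsub, Matrix.mulVec_sub, Matrix.mulVec_smul]
      simp
    rw [h0, Matrix.mulVec_single]
    simp only [MulOpposite.op_one, one_smul, Matrix.col_apply]
    rw [he, div_mul_cancel₀ _ hAinvpp, sub_self]
  have hAx : A *ᵥ x = v := by
    rw [hxdef, Matrix.mulVec_mulVec, Matrix.mul_nonsing_inv A hdet, Matrix.one_mulVec]
  have hsum : ∀ j : Fin m, (A *ᵥ x) j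
      = A j p * x p + ∑ k : {k : Fin m // k ≠ p}, A j k.1 * x k.1 := by
    intro j
    rw [Matrix.mulVec, dotProduct]
    exact rippa_sum_split p (fun k => A j k * x k)
  set M := A.submatrix (Subtype.val : {j : Fin m // j ≠ p} → Fin m)
      (Subtype.val : {j : Fin m // j ≠ p} → Fin m) with hM
  have hMdet : IsUnit M.det := (Matrix.isUnit_iff_isUnit_det M).mp hApp
  have hMy : M *ᵥ (fun j => x j.1) = fun j => g j.1 := by
    funext j
    have h1 : (A *ᵥ x) j.1 = g j.1 := by
      rw [hAx, hvdef]
      simp [Pi.single_eq_of_ne j.2]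
    have h2 := hsum j.1
    rw [h1, hxp, mul_zero, zero_add] at h2
    rw [h2]
    rfl
  have hcpx : cp = fun j => x j.1 := by
    have h3 : M *ᵥ cp = M *ᵥ (fun j => x j.1) := by rw [hcp, hMy]
    have h4 := congrArg (fun w => M⁻¹ *ᵥ w) h3
    simpa [Matrix.mulVec_mulVec, Matrix.nonsing_inv_mul M hMdet, Matrix.one_mulVec] using h4
  have hp := hsum p
  rw [hAx, hxp, mul_zero, zero_add] at hp
  have hvp : v p = g p - e := by simp [hvdef]
  rw [hvp] at hp
  rw [hcpx]
  linarith [hp]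
end

section
/- Characterization of the auxiliary vector β. Let G be an invertible m×m real matrix, g ∈ ℝ^m, and p : Fin v → Fin m injective with the submatrix G^{p,p} invertible. Let c^(p) be the unique solution of G^{p,p} c^(p) = g^p, and let b ∈ ℝ^m be the zero-extension of c^(p), i.e. b_{p_i} = 0 for all i and b_j = (c^(p))_j for j not in the range of p. Define β ∈ ℝ^v by β_i = g_{p_i} − (G b)_{p_i}. Then (G⁻¹)_{p,p} β = (G⁻¹ g)_p; in particular, if (G⁻¹)_{p,p} is invertible, β = ((G⁻¹)_{p,p})⁻¹ (G⁻¹ g)_p. -/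
open Matrix
open scoped Classical

/-- Characterization of the auxiliary vector `β`: with `b` the zero-extension of the reduced
solution `c^(p)` and `β_i = g_{p_i} − (G b)_{p_i}`, one has `(G⁻¹)_{p,p} β = (G⁻¹ g)_p`;
in particular, if `(G⁻¹)_{p,p}` is invertible then `β = ((G⁻¹)_{p,p})⁻¹ (G⁻¹ g)_p`. -/
theorem beta_characterization {m v : ℕ}
    (G : Matrix (Fin m) (Fin m) ℝ) (g : Fin m → ℝ)
    (hG : IsUnit G)
    (p : Fin v → Fin m) (hp : Function.Injective p)
    (hGpp : IsUnit (G.submatrix (Subtype.val : {j : Fin m // j ∉ Set.range p} → Fin m)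
      (Subtype.val : {j : Fin m // j ∉ Set.range p} → Fin m)))
    (cp : {j : Fin m // j ∉ Set.range p} → ℝ)
    (hcp : G.submatrix (Subtype.val : {j : Fin m // j ∉ Set.range p} → Fin m)
      (Subtype.val : {j : Fin m // j ∉ Set.range p} → Fin m) *ᵥ cp = fun j => g j.1)
    (b : Fin m → ℝ)
    (hb : b = fun j => if hj : j ∈ Set.range p then 0 else cp ⟨j, hj⟩)
    (β : Fin v → ℝ)
    (hβ : β = fun i => g (p i) - (G *ᵥ b) (p i)) :
    ((G⁻¹).submatrix p p *ᵥ β = fun i => (G⁻¹ *ᵥ g) (p i)) ∧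
      (IsUnit ((G⁻¹).submatrix p p) →
        β = ((G⁻¹).submatrix p p)⁻¹ *ᵥ fun i => (G⁻¹ *ᵥ g) (p i)) := by
  have hGdet : IsUnit G.det := (Matrix.isUnit_iff_isUnit_det G).mp hG
  set r : Fin m → ℝ := fun k => g k - (G *ᵥ b) k with hr
  -- r vanishes off the range of p
  have hGb : ∀ k, (G *ᵥ b) k = ∑ l : {j : Fin m // j ∉ Set.range p}, G k l.1 * cp l := by
    intro k
    rw [mulVec, dotProduct]
    rw [← Equiv.sum_comp (Equiv.sumCompl (fun j => j ∈ Set.range p)), Fintype.sum_sum_type]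
    simp [hb, Equiv.sumCompl]
    rw [Finset.sum_eq_zero (fun x _ => dif_pos x.2), zero_add]
    exact Finset.sum_congr rfl fun x _ => if_neg x.2
  have hr0 : ∀ k, k ∉ Set.range p → r k = 0 := by
    intro k hk
    have := congrFun hcp ⟨k, hk⟩
    rw [mulVec, dotProduct] at this
    simp only [hr, hGb k]
    simp only [submatrix_apply] at this
    rw [this]
    ring
  -- G⁻¹ r = G⁻¹ g - b
  have hinv : G⁻¹ *ᵥ r = fun k => (G⁻¹ *ᵥ g) k - b k := by
    have : r = g - G *ᵥ b := rfl
    rw [this, mulVec_sub, mulVec_mulVec, Matrix.nonsing_inv_mul G hGdet, one_mulVec]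
    rfl
  have hbp : ∀ i, b (p i) = 0 := by
    intro i; rw [hb]; simp
  have key : (G⁻¹).submatrix p p *ᵥ β = fun i => (G⁻¹ *ᵥ g) (p i) := by
    funext i
    have hsum : ((G⁻¹).submatrix p p *ᵥ β) i = (G⁻¹ *ᵥ r) (p i) := by
      rw [mulVec, dotProduct, mulVec, dotProduct]
      rw [← Equiv.sum_comp (Equiv.sumCompl (fun j => j ∈ Set.range p))
        (fun k => G⁻¹ (p i) k * r k), Fintype.sum_sum_type]
      have h2 : ∑ l : {j : Fin m // ¬ j ∈ Set.range p},
          G⁻¹ (p i) ((Equiv.sumCompl (fun j => j ∈ Set.range p)) (Sum.inr l)) *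
            r ((Equiv.sumCompl (fun j => j ∈ Set.range p)) (Sum.inr l)) = 0 := by
        apply Finset.sum_eq_zero
        intro l _
        simp [Equiv.sumCompl, hr0 l.1 l.2]
      rw [h2, add_zero]
      rw [← Equiv.sum_comp (Equiv.ofInjective p hp)
        (fun l : {j : Fin m // j ∈ Set.range p} =>
          G⁻¹ (p i) ((Equiv.sumCompl (fun j => j ∈ Set.range p)) (Sum.inl l)) *
            r ((Equiv.sumCompl (fun j => j ∈ Set.range p)) (Sum.inl l)))]
      apply Finset.sum_congr rfl
      intro j _
      simp [Equiv.sumCompl, Equiv.ofInjective, submatrix_apply, hβ, hr]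
    rw [hsum, hinv]
    simp [hbp i]
  refine ⟨key, fun hU => ?_⟩
  have hUdet : IsUnit ((G⁻¹).submatrix p p).det :=
    (Matrix.isUnit_iff_isUnit_det _).mp hU
  rw [← key, mulVec_mulVec, Matrix.nonsing_inv_mul _ hUdet, one_mulVec]
end

section
/- Zero-extension representation of the reduced solution. Let G be an invertible m×m real matrix, g ∈ ℝ^m, and p : Fin v → Fin m injective with (G⁻¹)_{p,p} invertible. Define β = ((G⁻¹)_{p,p})⁻¹ (G⁻¹ g)_p and b = G⁻¹g − (G⁻¹)_{:,p} β. Then b_{p_i} = 0 for every i ∈ Fin v, and (G b)_i = g_i for every index i not in the range of p; consequently the restriction b^p of b to the complement of the range of p satisfies G^{p,p} b^p = g^p. -/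
open Matrix
open scoped Classical

/-- Zero-extension representation of the reduced solution: with
`β = ((G⁻¹)_{p,p})⁻¹ (G⁻¹ g)_p` and `b = G⁻¹g − (G⁻¹)_{:,p} β`, the vector `b` vanishes on
the validation indices, `(G b)_i = g_i` off the range of `p`, and `G^{p,p} b^p = g^p`. -/
theorem zero_extension_reduced_solution {m v : ℕ}
    (G : Matrix (Fin m) (Fin m) ℝ) (g : Fin m → ℝ)
    (hG : IsUnit G)
    (p : Fin v → Fin m) (hp : Function.Injective p)
    (hGinvpp : IsUnit ((G⁻¹).submatrix p p))
    (β : Fin v → ℝ)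
    (hβ : β = ((G⁻¹).submatrix p p)⁻¹ *ᵥ fun i => (G⁻¹ *ᵥ g) (p i))
    (b : Fin m → ℝ)
    (hb : b = G⁻¹ *ᵥ g - (G⁻¹).submatrix id p *ᵥ β) :
    (∀ i : Fin v, b (p i) = 0) ∧
      (∀ i : Fin m, i ∉ Set.range p → (G *ᵥ b) i = g i) ∧
      G.submatrix (Subtype.val : {j : Fin m // j ∉ Set.range p} → Fin m)
          (Subtype.val : {j : Fin m // j ∉ Set.range p} → Fin m) *ᵥ (fun j => b j.1) =
        fun j => g j.1 := by
  have hGG : G * G⁻¹ = 1 := G.mul_nonsing_inv ((Matrix.isUnit_iff_isUnit_det G).mp hG)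
  have hpp : (G⁻¹).submatrix p p * ((G⁻¹).submatrix p p)⁻¹ = 1 :=
    Matrix.mul_nonsing_inv _ ((Matrix.isUnit_iff_isUnit_det _).mp hGinvpp)
  -- β solves the submatrix system
  have hβsys : (G⁻¹).submatrix p p *ᵥ β = fun i => (G⁻¹ *ᵥ g) (p i) := by
    rw [hβ, Matrix.mulVec_mulVec, hpp, Matrix.one_mulVec]
  -- Part 1
  have h1 : ∀ i : Fin v, b (p i) = 0 := by
    intro i
    have h2 : ((G⁻¹).submatrix id p *ᵥ β) (p i) = ((G⁻¹).submatrix p p *ᵥ β) i := by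
      simp [Matrix.mulVec, dotProduct]
    have := congrFun hβsys i
    simp [hb, h2, this]
  -- key : the correction term vanishes off the range
  have hkey : ∀ i : Fin m, (G *ᵥ ((G⁻¹).submatrix id p *ᵥ β)) i
      = ∑ k : Fin v, (1 : Matrix (Fin m) (Fin m) ℝ) i (p k) * β k := by
    intro i
    simp only [Matrix.mulVec, dotProduct, Matrix.submatrix_apply, id_eq]
    simp_rw [Finset.mul_sum]
    rw [Finset.sum_comm]
    refine Finset.sum_congr rfl fun k _ => ?_
    simp_rw [← mul_assoc, ← Finset.sum_mul]
    rw [← Matrix.mul_apply, hGG]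
  have h2 : ∀ i : Fin m, i ∉ Set.range p → (G *ᵥ b) i = g i := by
    intro i hi
    have hbv : G *ᵥ b = G *ᵥ (G⁻¹ *ᵥ g) - G *ᵥ ((G⁻¹).submatrix id p *ᵥ β) := by
      rw [hb, Matrix.mulVec_sub]
    have hGg : G *ᵥ (G⁻¹ *ᵥ g) = g := by
      rw [Matrix.mulVec_mulVec, hGG, Matrix.one_mulVec]
    have hz : (G *ᵥ ((G⁻¹).submatrix id p *ᵥ β)) i = 0 := by
      rw [hkey i]
      refine Finset.sum_eq_zero fun k _ => ?_
      rw [Matrix.one_apply_ne, zero_mul]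
      exact fun h => hi ⟨k, h.symm⟩
    have := congrFun hbv i
    rw [this, Pi.sub_apply, hGg, hz, sub_zero]
  refine ⟨h1, h2, ?_⟩
  funext j
  have hsplit : ∑ k : Fin m, G j.1 k * b k
      = (∑ k ∈ Finset.univ.filter (fun k => k ∈ Set.range p), G j.1 k * b k)
        + ∑ k ∈ Finset.univ.filter (fun k => k ∉ Set.range p), G j.1 k * b k :=
    (Finset.sum_filter_add_sum_filter_not _ _ _).symm
  have hzero : ∑ k ∈ Finset.univ.filter (fun k => k ∈ Set.range p), G j.1 k * b k = 0 := by
    refine Finset.sum_eq_zero fun k hk => ?_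
    obtain ⟨i, rfl⟩ := (Finset.mem_filter.mp hk).2
    rw [h1 i, mul_zero]
  have hsub : ∑ k : {j : Fin m // j ∉ Set.range p}, G j.1 k.1 * b k.1
      = ∑ k ∈ Finset.univ.filter (fun k => k ∉ Set.range p), G j.1 k * b k := by
    rw [Finset.sum_subtype (p := fun k => k ∉ Set.range p)
      (Finset.univ.filter (fun k => k ∉ Set.range p)) (by simp) (fun k => G j.1 k * b k)]
  have hGb : (G *ᵥ b) j.1 = g j.1 := h2 j.1 j.2
  simp only [Matrix.mulVec, dotProduct, Matrix.submatrix_apply]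
  rw [hsub]
  have : ∑ k : Fin m, G j.1 k * b k = g j.1 := by
    simpa [Matrix.mulVec, dotProduct] using hGb
  rw [hsplit, hzero, zero_add] at this
  exact this
end

section
/- Linking identity between the correction vectors α and β. Let G and L be invertible m×m real matrices, g ∈ ℝ^m, f = L G⁻¹ g, and p : Fin v → Fin m injective. Suppose b ∈ ℝ^m and α, β ∈ ℝ^v satisfy L·b = f − Σ_{i=1}^{v} α_i I_{:,p_i} and G·b = g − Σ_{i=1}^{v} β_i I_{:,p_i}, where I_{:,j} denotes the j-th standard basis vector of ℝ^m. Then Σ_{i=1}^{v} α_i (L⁻¹)_{:,p_i} = Σ_{i=1}^{v} β_i (G⁻¹)_{:,p_i}; that is, (L⁻¹)_{:,p} α = (G⁻¹)_{:,p} β. -/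
open Matrix
open scoped Classical

private lemma mulVec_col_sum {m v : ℕ} (M : Matrix (Fin m) (Fin m) ℝ)
    (p : Fin v → Fin m) (α : Fin v → ℝ) :
    M *ᵥ (∑ i : Fin v, α i • fun j => (1 : Matrix (Fin m) (Fin m) ℝ) j (p i)) =
      ∑ i : Fin v, α i • fun j => M j (p i) := by
  have : (∑ i : Fin v, α i • fun j => (1 : Matrix (Fin m) (Fin m) ℝ) j (p i)) =
      ∑ i : Fin v, Pi.single (p i) (α i) := by
    refine Finset.sum_congr rfl fun i _ => ?_
    funext j
    simp [Matrix.one_apply, Pi.single_apply, eq_comm]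
  rw [this]
  rw [← Matrix.mulVecLin_apply, map_sum]
  refine Finset.sum_congr rfl fun i _ => ?_
  funext j
  simp [Matrix.mulVecLin_apply, Matrix.mulVec_single, mul_comm]

/-- Linking identity between the correction vectors `α` and `β`: if
`L b = f − Σᵢ αᵢ I_{:,pᵢ}` and `G b = g − Σᵢ βᵢ I_{:,pᵢ}` with `f = L G⁻¹ g`, then
`Σᵢ αᵢ (L⁻¹)_{:,pᵢ} = Σᵢ βᵢ (G⁻¹)_{:,pᵢ}`, i.e. `(L⁻¹)_{:,p} α = (G⁻¹)_{:,p} β`. -/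
theorem alpha_beta_link {m v : ℕ}
    (G L : Matrix (Fin m) (Fin m) ℝ) (g : Fin m → ℝ)
    (hG : IsUnit G) (hL : IsUnit L)
    (f : Fin m → ℝ) (hf : f = L *ᵥ (G⁻¹ *ᵥ g))
    (p : Fin v → Fin m) (hp : Function.Injective p)
    (b : Fin m → ℝ) (α β : Fin v → ℝ)
    (hLb : L *ᵥ b = f - ∑ i : Fin v, α i • fun j => (1 : Matrix (Fin m) (Fin m) ℝ) j (p i))
    (hGb : G *ᵥ b = g - ∑ i : Fin v, β i • fun j => (1 : Matrix (Fin m) (Fin m) ℝ) j (p i)) :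
    (∑ i : Fin v, α i • fun j => (L⁻¹) j (p i)) =
        (∑ i : Fin v, β i • fun j => (G⁻¹) j (p i)) ∧
      (L⁻¹).submatrix id p *ᵥ α = (G⁻¹).submatrix id p *ᵥ β := by
  have hLinv := Matrix.nonsing_inv_mul L (Matrix.isUnit_iff_isUnit_det L |>.mp hL)
  have hGinv := Matrix.nonsing_inv_mul G (Matrix.isUnit_iff_isUnit_det G |>.mp hG)
  have hbL : b = L⁻¹ *ᵥ f - ∑ i : Fin v, α i • fun j => (L⁻¹) j (p i) := by
    have := congrArg (fun x => L⁻¹ *ᵥ x) hLb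
    simpa [Matrix.mulVec_mulVec, hLinv, Matrix.mulVec_sub, mulVec_col_sum] using this
  have hbG : b = G⁻¹ *ᵥ g - ∑ i : Fin v, β i • fun j => (G⁻¹) j (p i) := by
    have := congrArg (fun x => G⁻¹ *ᵥ x) hGb
    simpa [Matrix.mulVec_mulVec, hGinv, Matrix.mulVec_sub, mulVec_col_sum] using this
  have hLf : L⁻¹ *ᵥ f = G⁻¹ *ᵥ g := by
    rw [hf, Matrix.mulVec_mulVec, Matrix.mulVec_mulVec, hLinv, Matrix.one_mul]
  have hmain : (∑ i : Fin v, α i • fun j => (L⁻¹) j (p i)) =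
      ∑ i : Fin v, β i • fun j => (G⁻¹) j (p i) := by
    have h := hbL.symm.trans hbG
    rw [hLf] at h
    exact sub_right_injective h
  refine ⟨hmain, ?_⟩
  funext j
  have := congrFun hmain j
  simp only [Finset.sum_apply, Pi.smul_apply, smul_eq_mul] at this
  simpa [Matrix.mulVec, dotProduct, Matrix.submatrix_apply, mul_comm] using this
end
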